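/- Over any field K of characteristic 0, the K-algebras K[x,y,z,u]/⟨xy - z² + 1⟩ and K[x,y,z,v]/⟨x²y - z² + 1⟩ are isomorphic as K-algebras. An explicit isomorphism is induced by φ: x ↦ x, y ↦ xv² + 2zv + xy, z ↦ xv + z, u ↦ xv³ + 3zv² + 3xyv + yz. -/
import Mathlib

open MvPolynomial

set_option maxHeartbeats 1000000

namespace Stmt6Aux

variable {K : Type*} [Field K] [CharZero K]

noncomputable section

local notation "t" => (C (2⁻¹ : K) : MvPolynomial (Fin 4) K)

def f1 : MvPolynomial (Fin 4) K := X 0 * X 1 - X 2 ^ 2 + 1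
def f2 : MvPolynomial (Fin 4) K := X 0 ^ 2 * X 1 - X 2 ^ 2 + 1

def phiv : Fin 4 → MvPolynomial (Fin 4) K :=
  ![X 0, X 0 * X 3 ^ 2 + 2 * X 2 * X 3 + X 0 * X 1, X 0 * X 3 + X 2,
    X 0 * X 3 ^ 3 + 3 * X 2 * X 3 ^ 2 + 3 * X 0 * X 1 * X 3 + X 1 * X 2]

def wpoly : MvPolynomial (Fin 4) K := t * (X 2 * X 1 - X 0 * X 3)

def psiv : Fin 4 → MvPolynomial (Fin 4) K :=
  ![X 0,
    X 2 * (X 3 - 2 * wpoly * X 1 + X 2 * wpoly ^ 2)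
      - X 1 * (X 1 + X 0 * wpoly ^ 2 - 2 * X 2 * wpoly),
    X 2 - X 0 * wpoly, wpoly]

lemma hC : (C (2⁻¹ : K) : MvPolynomial (Fin 4) K) * 2 = 1 := by
  rw [show (2 : MvPolynomial (Fin 4) K) = C (2 : K) from (map_ofNat C 2).symm, ← C_mul]
  norm_num

lemma phi_f1 : (aeval (R := K) (phiv (K := K))) f1 = f2 := by
  simp only [f1, f2, phiv, psiv, wpoly, map_add, map_sub, map_mul, map_pow, map_one,
      map_ofNat, aeval_X, aeval_C, algebraMap_eq, Fin.isValue, Matrix.cons_val_zero, Matrix.cons_val_one,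
      Matrix.head_cons, Matrix.cons_val_two, Matrix.tail_cons, Matrix.cons_val_three]
  ring

lemma psi_f2 : (aeval (R := K) (psiv (K := K))) f2 = f1 * ((4 : MvPolynomial (Fin 4) K)*t^2 + (-4 : MvPolynomial (Fin 4) K)*X 0*X 1*t^2 + (-1 : MvPolynomial (Fin 4) K)*X 0^2*X 1^2*X 2^2*t^2 + (2 : MvPolynomial (Fin 4) K)*X 0^3*X 1*X 2*X 3*t^2 + (-1 : MvPolynomial (Fin 4) K)*X 0^4*X 3^2*t^2) := by
  simp only [f1, f2, phiv, psiv, wpoly, map_add, map_sub, map_mul, map_pow, map_one,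
      map_ofNat, aeval_X, aeval_C, algebraMap_eq, Fin.isValue, Matrix.cons_val_zero, Matrix.cons_val_one,
      Matrix.head_cons, Matrix.cons_val_two, Matrix.tail_cons, Matrix.cons_val_three]
  linear_combination ((-1 : MvPolynomial (Fin 4) K) + (-2 : MvPolynomial (Fin 4) K)*t + X 2^2 + (2 : MvPolynomial (Fin 4) K)*X 2^2*t + (-2 : MvPolynomial (Fin 4) K)*X 0*X 1*X 2^2*t + (-1 : MvPolynomial (Fin 4) K)*X 0^2*X 2*X 3 + X 0^2*X 1^2 + (2 : MvPolynomial (Fin 4) K)*X 0^2*X 1^2*t) * (hC (K := K))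

lemma pp0 : (aeval (R := K) (psiv (K := K))) ((aeval (R := K) (phiv (K := K))) (X 0)) - X 0 = f1 * (0) := by
  simp only [f1, f2, phiv, psiv, wpoly, map_add, map_sub, map_mul, map_pow, map_one,
      map_ofNat, aeval_X, aeval_C, algebraMap_eq, Fin.isValue, Matrix.cons_val_zero, Matrix.cons_val_one,
      Matrix.head_cons, Matrix.cons_val_two, Matrix.tail_cons, Matrix.cons_val_three]
  linear_combination (0) * (hC (K := K))

lemma pp1 : (aeval (R := K) (psiv (K := K))) ((aeval (R := K) (phiv (K := K))) (X 1)) - X 1 = f1 * ((-4 : MvPolynomial (Fin 4) K)*X 1*t^2 + (-1 : MvPolynomial (Fin 4) K)*X 0*X 1^2*X 2^2*t^2 + (2 : MvPolynomial (Fin 4) K)*X 0^2*X 1*X 2*X 3*t^2 + (-1 : MvPolynomial (Fin 4) K)*X 0^3*X 3^2*t^2) := by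
  simp only [f1, f2, phiv, psiv, wpoly, map_add, map_sub, map_mul, map_pow, map_one,
      map_ofNat, aeval_X, aeval_C, algebraMap_eq, Fin.isValue, Matrix.cons_val_zero, Matrix.cons_val_one,
      Matrix.head_cons, Matrix.cons_val_two, Matrix.tail_cons, Matrix.cons_val_three]
  linear_combination (X 1 + (2 : MvPolynomial (Fin 4) K)*X 1*t + (-2 : MvPolynomial (Fin 4) K)*X 1*X 2^2*t + (-1 : MvPolynomial (Fin 4) K)*X 0*X 2*X 3 + X 0*X 1^2 + (2 : MvPolynomial (Fin 4) K)*X 0*X 1^2*t) * (hC (K := K))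

lemma pp2 : (aeval (R := K) (psiv (K := K))) ((aeval (R := K) (phiv (K := K))) (X 2)) - X 2 = f1 * (0) := by
  simp only [f1, f2, phiv, psiv, wpoly, map_add, map_sub, map_mul, map_pow, map_one,
      map_ofNat, aeval_X, aeval_C, algebraMap_eq, Fin.isValue, Matrix.cons_val_zero, Matrix.cons_val_one,
      Matrix.head_cons, Matrix.cons_val_two, Matrix.tail_cons, Matrix.cons_val_three]
  linear_combination (0) * (hC (K := K))

lemma pp3 : (aeval (R := K) (psiv (K := K))) ((aeval (R := K) (phiv (K := K))) (X 3)) - X 3 = f1 * ((-8 : MvPolynomial (Fin 4) K)*X 3*t^3 + (-8 : MvPolynomial (Fin 4) K)*X 1^2*X 2*t^3 + (-2 : MvPolynomial (Fin 4) K)*X 1^2*X 2^3*t^3 + (8 : MvPolynomial (Fin 4) K)*X 0*X 1*X 3*t^3 + (4 : MvPolynomial (Fin 4) K)*X 0*X 1*X 2^2*X 3*t^3 + (-2 : MvPolynomial (Fin 4) K)*X 0*X 1^3*X 2^3*t^3 + (-2 : MvPolynomial (Fin 4) K)*X 0^2*X 2*X 3^2*t^3 + (6 : MvPolynomial (Fin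 4) K)*X 0^2*X 1^2*X 2^2*X 3*t^3 + (-6 : MvPolynomial (Fin 4) K)*X 0^3*X 1*X 2*X 3^2*t^3 + (2 : MvPolynomial (Fin 4) K)*X 0^4*X 3^3*t^3) := by
  simp only [f1, f2, phiv, psiv, wpoly, map_add, map_sub, map_mul, map_pow, map_one,
      map_ofNat, aeval_X, aeval_C, algebraMap_eq, Fin.isValue, Matrix.cons_val_zero, Matrix.cons_val_one,
      Matrix.head_cons, Matrix.cons_val_two, Matrix.tail_cons, Matrix.cons_val_three]
  linear_combination (X 3 + (2 : MvPolynomial (Fin 4) K)*X 3*t + (4 : MvPolynomial (Fin 4) K)*X 3*t^2 + (-1 : MvPolynomial (Fin 4) K)*X 2^2*X 3 + (-2 : MvPolynomial (Fin 4) K)*X 2^2*X 3*t + (-4 : MvPolynomial (Fin 4) K)*X 2^2*X 3*t^2 + X 1^2*X 2 + (2 : MvPolynomial (Fin 4) K)*X 1^2*X 2*t + (4 : MvPolynomial (Fin 4) K)*X 1^2*X 2*t^2 + (-3 : MvPolynomial (Fin 4) K)*X 1^2*X 2^3*t^2 + (-1 : MvPolynomial (Fin 4) K)*X 1^2*X 2^5*t^2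 + (-2 : MvPolynomial (Fin 4) K)*X 0*X 1*X 2^2*X 3*t + (2 : MvPolynomial (Fin 4) K)*X 0*X 1*X 2^2*X 3*t^2 + (2 : MvPolynomial (Fin 4) K)*X 0*X 1*X 2^4*X 3*t^2 + (2 : MvPolynomial (Fin 4) K)*X 0*X 1^3*X 2*t + (4 : MvPolynomial (Fin 4) K)*X 0*X 1^3*X 2*t^2 + X 0*X 1^3*X 2^3*t^2 + (2 : MvPolynomial (Fin 4) K)*X 0^2*X 2*X 3^2*t + X 0^2*X 2*X 3^2*t^2 + (-1 : MvPolynomial (Fin 4) K)*X 0^2*X 2^3*X 3^2*t^2 + (-2 : MvPolynomial (Fin 4) K)*X 0^2*X 1^2*X 3*t + (-4 : MvPolynomial (Fin 4) K)*X 0^2*X 1^2*X 3*t^2 + (-2 : MvPolynomial (Fin 4) K)*X 0^2*X 1^2*X 2^2*X 3*t^2 + X 0^3*X 1*X 2*X 3^2*t^2) * (hC (K := K))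

lemma qq0 : (aeval (R := K) (phiv (K := K))) ((aeval (R := K) (psiv (K := K))) (X 0)) - X 0 = f2 * (0) := by
  simp only [f1, f2, phiv, psiv, wpoly, map_add, map_sub, map_mul, map_pow, map_one,
      map_ofNat, aeval_X, aeval_C, algebraMap_eq, Fin.isValue, Matrix.cons_val_zero, Matrix.cons_val_one,
      Matrix.head_cons, Matrix.cons_val_two, Matrix.tail_cons, Matrix.cons_val_three]
  linear_combination (0) * (hC (K := K))

lemma qq1 : (aeval (R := K) (phiv (K := K))) ((aeval (R := K) (psiv (K := K))) (X 1)) - X 1 = f2 * ((-4 : MvPolynomial (Fin 4) K)*X 2^2*X 3^2*t^2 + (-4 : MvPolynomial (Fin 4) K)*X 2^4*X 3^2*t^2 + (-4 : MvPolynomial (Fin 4) K)*X 1*t^2 + (4 : MvPolynomial (Fin 4) K)*X 0^2*X 1*X 3^2*t^2 + (8 : MvPolynomial (Fin 4) K)*X 0^2*X 1*X 2^2*X 3^2*t^2 + (-4 : MvPolynomial (Fin 4) K)*X 0^4*X 1^2*X 3^2*t^2) := by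
  simp only [f1, f2, phiv, psiv, wpoly, map_add, map_sub, map_mul, map_pow, map_one,
      map_ofNat, aeval_X, aeval_C, algebraMap_eq, Fin.isValue, Matrix.cons_val_zero, Matrix.cons_val_one,
      Matrix.head_cons, Matrix.cons_val_two, Matrix.tail_cons, Matrix.cons_val_three]
  linear_combination (X 2^2*X 3^2 + (2 : MvPolynomial (Fin 4) K)*X 2^2*X 3^2*t + X 1 + (2 : MvPolynomial (Fin 4) K)*X 1*t + (-1 : MvPolynomial (Fin 4) K)*X 1*X 2^2 + (-2 : MvPolynomial (Fin 4) K)*X 1*X 2^2*t + (-1 : MvPolynomial (Fin 4) K)*X 0^2*X 1*X 3^2 + (-2 : MvPolynomial (Fin 4) K)*X 0^2*X 1*X 3^2*t + X 0^2*X 1^2 + (2 : MvPolynomial (Fin 4) K)*X 0^2*X 1^2*t) * (hC (K := K))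

lemma qq2 : (aeval (R := K) (phiv (K := K))) ((aeval (R := K) (psiv (K := K))) (X 2)) - X 2 = f2 * ((2 : MvPolynomial (Fin 4) K)*X 0*X 3*t) := by
  simp only [f1, f2, phiv, psiv, wpoly, map_add, map_sub, map_mul, map_pow, map_one,
      map_ofNat, aeval_X, aeval_C, algebraMap_eq, Fin.isValue, Matrix.cons_val_zero, Matrix.cons_val_one,
      Matrix.head_cons, Matrix.cons_val_two, Matrix.tail_cons, Matrix.cons_val_three]
  linear_combination ((-1 : MvPolynomial (Fin 4) K)*X 0*X 3) * (hC (K := K))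

lemma qq3 : (aeval (R := K) (phiv (K := K))) ((aeval (R := K) (psiv (K := K))) (X 3)) - X 3 = f2 * ((-2 : MvPolynomial (Fin 4) K)*X 3*t) := by
  simp only [f1, f2, phiv, psiv, wpoly, map_add, map_sub, map_mul, map_pow, map_one,
      map_ofNat, aeval_X, aeval_C, algebraMap_eq, Fin.isValue, Matrix.cons_val_zero, Matrix.cons_val_one,
      Matrix.head_cons, Matrix.cons_val_two, Matrix.tail_cons, Matrix.cons_val_three]
  linear_combination (X 3) * (hC (K := K))

lemma descend {B : Type*} [CommRing B] [Algebra K B] (g : MvPolynomial (Fin 4) K →ₐ[K] B)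
    (f : MvPolynomial (Fin 4) K) (h : g f = 0) : ∀ a ∈ Ideal.span {f}, g a = 0 := by
  intro a ha
  obtain ⟨c, rfl⟩ := Ideal.mem_span_singleton.mp ha
  rw [map_mul, h, zero_mul]

def Φ : MvPolynomial (Fin 4) K →ₐ[K]
    (MvPolynomial (Fin 4) K ⧸ Ideal.span {(f2 : MvPolynomial (Fin 4) K)}) :=
  (Ideal.Quotient.mkₐ K _).comp (aeval phiv)

def Ψ : MvPolynomial (Fin 4) K →ₐ[K]
    (MvPolynomial (Fin 4) K ⧸ Ideal.span {(f1 : MvPolynomial (Fin 4) K)}) :=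
  (Ideal.Quotient.mkₐ K _).comp (aeval psiv)

lemma hΦ : ∀ a ∈ Ideal.span {(f1 : MvPolynomial (Fin 4) K)}, Φ a = 0 := by
  apply descend
  show Ideal.Quotient.mkₐ K _ ((aeval (R := K) (phiv (K := K))) f1) = 0
  rw [phi_f1]
  exact Ideal.Quotient.eq_zero_iff_mem.mpr (Ideal.mem_span_singleton_self _)

lemma hΨ : ∀ a ∈ Ideal.span {(f2 : MvPolynomial (Fin 4) K)}, Ψ a = 0 := by
  apply descend
  show Ideal.Quotient.mkₐ K _ ((aeval (R := K) (psiv (K := K))) f2) = 0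
  rw [psi_f2]
  exact Ideal.Quotient.eq_zero_iff_mem.mpr
    (Ideal.mul_mem_right _ _ (Ideal.mem_span_singleton_self _))

def Φ' : (MvPolynomial (Fin 4) K ⧸ Ideal.span {(f1 : MvPolynomial (Fin 4) K)}) →ₐ[K]
    (MvPolynomial (Fin 4) K ⧸ Ideal.span {(f2 : MvPolynomial (Fin 4) K)}) :=
  Ideal.Quotient.liftₐ _ Φ hΦ

def Ψ' : (MvPolynomial (Fin 4) K ⧸ Ideal.span {(f2 : MvPolynomial (Fin 4) K)}) →ₐ[K]
    (MvPolynomial (Fin 4) K ⧸ Ideal.span {(f1 : MvPolynomial (Fin 4) K)}) :=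
  Ideal.Quotient.liftₐ _ Ψ hΨ

lemma Φ'_mk (p : MvPolynomial (Fin 4) K) :
    Φ' (Ideal.Quotient.mk _ p) = Ideal.Quotient.mk _ ((aeval (R := K) phiv) p) := rfl

lemma Ψ'_mk (p : MvPolynomial (Fin 4) K) :
    Ψ' (Ideal.Quotient.mk _ p) = Ideal.Quotient.mk _ ((aeval (R := K) psiv) p) := rfl

lemma comp1 : (Ψ' (K := K)).comp Φ' = AlgHom.id K _ := by
  apply Ideal.Quotient.algHom_ext
  apply MvPolynomial.algHom_ext
  intro i
  fin_cases i
  · show Ψ' (Φ' (Ideal.Quotient.mk _ (X 0))) = Ideal.Quotient.mk _ (X 0)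
    rw [Φ'_mk, Ψ'_mk, Ideal.Quotient.eq]
    exact Ideal.mem_span_singleton.mpr ⟨_, pp0⟩
  · show Ψ' (Φ' (Ideal.Quotient.mk _ (X 1))) = Ideal.Quotient.mk _ (X 1)
    rw [Φ'_mk, Ψ'_mk, Ideal.Quotient.eq]
    exact Ideal.mem_span_singleton.mpr ⟨_, pp1⟩
  · show Ψ' (Φ' (Ideal.Quotient.mk _ (X 2))) = Ideal.Quotient.mk _ (X 2)
    rw [Φ'_mk, Ψ'_mk, Ideal.Quotient.eq]
    exact Ideal.mem_span_singleton.mpr ⟨_, pp2⟩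
  · show Ψ' (Φ' (Ideal.Quotient.mk _ (X 3))) = Ideal.Quotient.mk _ (X 3)
    rw [Φ'_mk, Ψ'_mk, Ideal.Quotient.eq]
    exact Ideal.mem_span_singleton.mpr ⟨_, pp3⟩

lemma comp2 : (Φ' (K := K)).comp Ψ' = AlgHom.id K _ := by
  apply Ideal.Quotient.algHom_ext
  apply MvPolynomial.algHom_ext
  intro i
  fin_cases i
  · show Φ' (Ψ' (Ideal.Quotient.mk _ (X 0))) = Ideal.Quotient.mk _ (X 0)
    rw [Ψ'_mk, Φ'_mk, Ideal.Quotient.eq]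
    exact Ideal.mem_span_singleton.mpr ⟨_, qq0⟩
  · show Φ' (Ψ' (Ideal.Quotient.mk _ (X 1))) = Ideal.Quotient.mk _ (X 1)
    rw [Ψ'_mk, Φ'_mk, Ideal.Quotient.eq]
    exact Ideal.mem_span_singleton.mpr ⟨_, qq1⟩
  · show Φ' (Ψ' (Ideal.Quotient.mk _ (X 2))) = Ideal.Quotient.mk _ (X 2)
    rw [Ψ'_mk, Φ'_mk, Ideal.Quotient.eq]
    exact Ideal.mem_span_singleton.mpr ⟨_, qq2⟩
  · show Φ' (Ψ' (Ideal.Quotient.mk _ (X 3))) = Ideal.Quotient.mk _ (X 3)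
    rw [Ψ'_mk, Φ'_mk, Ideal.Quotient.eq]
    exact Ideal.mem_span_singleton.mpr ⟨_, qq3⟩

def eIso : (MvPolynomial (Fin 4) K ⧸ Ideal.span {(f1 : MvPolynomial (Fin 4) K)}) ≃ₐ[K]
    (MvPolynomial (Fin 4) K ⧸ Ideal.span {(f2 : MvPolynomial (Fin 4) K)}) :=
  AlgEquiv.ofAlgHom Φ' Ψ' comp2 comp1

lemma eIso_mk0 : eIso (K := K) (Ideal.Quotient.mk _ (X 0)) = Ideal.Quotient.mk _ (X 0) := by
  show Φ' (Ideal.Quotient.mk _ (X 0)) = _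
  rw [Φ'_mk]
  congr 1
  simp only [phiv, aeval_X, Fin.isValue, Matrix.cons_val_zero, Matrix.cons_val_one,
    Matrix.head_cons, Matrix.cons_val_two, Matrix.tail_cons, Matrix.cons_val_three]

lemma eIso_mk1 : eIso (K := K) (Ideal.Quotient.mk _ (X 1))
    = Ideal.Quotient.mk _ (X 0 * X 3 ^ 2 + 2 * X 2 * X 3 + X 0 * X 1) := by
  show Φ' (Ideal.Quotient.mk _ (X 1)) = _
  rw [Φ'_mk]
  congr 1
  simp only [phiv, aeval_X, Fin.isValue, Matrix.cons_val_zero, Matrix.cons_val_one,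
    Matrix.head_cons, Matrix.cons_val_two, Matrix.tail_cons, Matrix.cons_val_three]

lemma eIso_mk2 : eIso (K := K) (Ideal.Quotient.mk _ (X 2))
    = Ideal.Quotient.mk _ (X 0 * X 3 + X 2) := by
  show Φ' (Ideal.Quotient.mk _ (X 2)) = _
  rw [Φ'_mk]
  congr 1
  simp only [phiv, aeval_X, Fin.isValue, Matrix.cons_val_zero, Matrix.cons_val_one,
    Matrix.head_cons, Matrix.cons_val_two, Matrix.tail_cons, Matrix.cons_val_three]

lemma eIso_mk3 : eIso (K := K) (Ideal.Quotient.mk _ (X 3))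
    = Ideal.Quotient.mk _
        (X 0 * X 3 ^ 3 + 3 * X 2 * X 3 ^ 2 + 3 * X 0 * X 1 * X 3 + X 1 * X 2) := by
  show Φ' (Ideal.Quotient.mk _ (X 3)) = _
  rw [Φ'_mk]
  congr 1
  simp only [phiv, aeval_X, Fin.isValue, Matrix.cons_val_zero, Matrix.cons_val_one,
    Matrix.head_cons, Matrix.cons_val_two, Matrix.tail_cons, Matrix.cons_val_three]

end

end Stmt6Aux

/-- over a field `K` of characteristic 0, the algebras
`K[x,y,z,u]/⟨xy - z² + 1⟩` and `K[x,y,z,v]/⟨x²y - z² + 1⟩` are isomorphic, via the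
explicit map `x ↦ x, y ↦ xv² + 2zv + xy, z ↦ xv + z, u ↦ xv³ + 3zv² + 3xyv + yz`.
Variables: `X 0 = x`, `X 1 = y`, `X 2 = z`, `X 3 = u` (resp. `v`). -/
theorem stmt6 {K : Type*} [Field K] [CharZero K] :
    ∃ e : (MvPolynomial (Fin 4) K ⧸
            Ideal.span {(X 0 * X 1 - X 2 ^ 2 + 1 : MvPolynomial (Fin 4) K)}) ≃ₐ[K]
          (MvPolynomial (Fin 4) K ⧸
            Ideal.span {(X 0 ^ 2 * X 1 - X 2 ^ 2 + 1 : MvPolynomial (Fin 4) K)}),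
      e (Ideal.Quotient.mk _ (X 0)) = Ideal.Quotient.mk _ (X 0) ∧
      e (Ideal.Quotient.mk _ (X 1))
        = Ideal.Quotient.mk _ (X 0 * X 3 ^ 2 + 2 * X 2 * X 3 + X 0 * X 1) ∧
      e (Ideal.Quotient.mk _ (X 2)) = Ideal.Quotient.mk _ (X 0 * X 3 + X 2) ∧
      e (Ideal.Quotient.mk _ (X 3))
        = Ideal.Quotient.mk _
            (X 0 * X 3 ^ 3 + 3 * X 2 * X 3 ^ 2 + 3 * X 0 * X 1 * X 3 + X 1 * X 2) := by
  exact ⟨Stmt6Aux.eIso, Stmt6Aux.eIso_mk0, Stmt6Aux.eIso_mk1, Stmt6Aux.eIso_mk2,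
    Stmt6Aux.eIso_mk3⟩
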